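/- Let 1 → A → Γ → G → 1 be an extension of a finite group G by a finite abelian group A, with associated cohomology class [β] ∈ H²(G,A), and let G act on a field K via φ : G → Aut(K). If a semi-projective representation f : G → PΓL(V) with class [α] ∈ H²(G,K*) is induced by a semi-linear representation F : Γ → ΓL(V) (i.e., F_γ is a scalar multiple of f_{π(γ)} for all γ, with f_1 = id), then [α] lies in the image of the transgression map tra : Hom_G(A, K*) → H²(G, K*), λ ↦ [λ ∘ β]. -/

import Mathlib

/-- Let `1 → A → Γ → G → 1` be an extension of a finite group `G` by a finite
abelian group `A`, with set-theoretic section `s`, extension 2-cocycle `β`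
(`s(gh) = β(g,h)·s(g)·s(h)`) and conjugation action `act` of `G` on `A`
(`ι(g∗a) = s(g)·ι(a)·s(g)⁻¹`), and let `G` act on the field `K` via `φ`.
If a semi-projective representation `f : G → PΓL(V)` with cocycle `α`
(given by representatives `f g` with `f 1 = id` and `f(gh) = α(g,h)·(f g ∘ f h)`)
is induced by a semi-linear representation `F : Γ → ΓL(V)`, then `[α]` lies in
the image of the transgression map `Hom_G(A,Kˣ) → H²(G,Kˣ)`, `λ ↦ [λ ∘ β]`;
i.e. `α` is cohomologous to `λ ∘ β` for some `G`-equivariant `λ : A →* Kˣ`. -/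
theorem transgression_of_semiLinear_lift
    {G K V A Γ : Type*} [Group G] [Finite G] [Field K]
    [AddCommGroup V] [Module K V] [Nontrivial V] [FiniteDimensional K V]
    [CommGroup A] [Finite A] [Group Γ]
    (φ : G →* (K ≃+* K))
    (ι : A →* Γ) (π : Γ →* G)
    (hι : Function.Injective ι) (hπ : Function.Surjective π)
    (hker : ι.range = π.ker)
    (s : G → Γ) (hs : ∀ g, π (s g) = g)
    (β : G → G → A) (hβ : ∀ g h, s (g * h) = ι (β g h) * s g * s h)
    (act : G → A → A) (hact : ∀ g a, ι (act g a) = s g * ι a * (s g)⁻¹)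
    (f : G → V → V) (α : G → G → Kˣ)
    (hone : f 1 = id)
    (hadd : ∀ g (v w : V), f g (v + w) = f g v + f g w)
    (hbij : ∀ g, Function.Bijective (f g))
    (hsl : ∀ g (c : K) (v : V), f g (c • v) = φ g c • f g v)
    (hα : ∀ g h (v : V), f (g * h) v = (α g h : K) • f g (f h v))
    (F : Γ → V → V)
    (hF : ∀ γ δ (v : V), F (γ * δ) v = F γ (F δ v))
    (hFf : ∀ γ, ∃ c : Kˣ, ∀ v, F γ v = (c : K) • f (π γ) v) :
    ∃ lam : A →* Kˣ,
      (∀ g a, lam (act g a) = Units.map (φ g).toRingHom.toMonoidHom (lam a)) ∧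
      ∃ τ : G → Kˣ, ∀ g h,
        (α g h : K) = lam (β g h) * (φ g (τ h : K) * (τ (g * h) : K)⁻¹ * (τ g : K)) := by
  classical
  choose c hc using hFf
  obtain ⟨v₀, hv₀⟩ := exists_ne (0 : V)
  have hmap0 : ∀ g, f g 0 = 0 := by
    intro g
    have h := hadd g 0 0
    rw [add_zero] at h
    exact (left_eq_add.mp h)
  have hne : ∀ g (v : V), v ≠ 0 → f g v ≠ 0 := by
    intro g v hv h
    exact hv ((hbij g).1 (h.trans (hmap0 g).symm))
  have hscal : ∀ (a b : K) (w : V), w ≠ 0 → a • w = b • w → a = b := by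
    intro a b w hw h
    have : (a - b) • w = 0 := by rw [sub_smul, h, sub_self]
    rcases smul_eq_zero.mp this with h' | h'
    · exact sub_eq_zero.mp h'
    · exact absurd h' hw
  have key : ∀ γ δ, (c (γ * δ) : K) * α (π γ) (π δ) = c γ * φ (π γ) (c δ) := by
    intro γ δ
    have hw : f (π γ) (f (π δ) v₀) ≠ 0 := hne _ _ (hne _ _ hv₀)
    have h1 : F (γ * δ) v₀ = ((c (γ * δ) : K) * α (π γ) (π δ)) • f (π γ) (f (π δ) v₀) := by
      rw [hc, map_mul, hα, smul_smul]
    have h2 : F (γ * δ) v₀ = ((c γ : K) * φ (π γ) (c δ)) • f (π γ) (f (π δ) v₀) := by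
      rw [hF, hc δ, hc γ, hsl, smul_smul]
    exact hscal _ _ _ hw (h1.symm.trans h2)
  have hα1l : ∀ h, (α 1 h : K) = 1 := by
    intro h
    have hw : f h v₀ ≠ 0 := hne _ _ hv₀
    have h1 := hα 1 h v₀
    rw [one_mul, hone] at h1
    simp only [id_eq] at h1
    exact hscal _ 1 _ hw (by rw [one_smul]; exact h1.symm)
  have hα1r : ∀ g, (α g 1 : K) = 1 := by
    intro g
    have hw : f g v₀ ≠ 0 := hne _ _ hv₀
    have h1 := hα g 1 v₀
    rw [mul_one, hone] at h1
    simp only [id_eq] at h1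
    exact hscal _ 1 _ hw (by rw [one_smul]; exact h1.symm)
  have hφ1 : ∀ x : K, φ 1 x = x := by
    intro x; rw [map_one φ]; rfl
  have hc1 : (c 1 : K) = 1 := by
    have h := key 1 1
    rw [mul_one, map_one π, hα1l 1, mul_one, hφ1] at h
    exact (mul_left_cancel₀ (Units.ne_zero (c 1)) (by rw [← h, mul_one])).symm
  have hπι : ∀ a, π (ι a) = 1 := by
    intro a
    have : ι a ∈ π.ker := hker ▸ ⟨a, rfl⟩
    exact this
  -- value of c on products with kernel elements
  have hcι : ∀ a (γ : Γ), (c (ι a * γ) : K) = c (ι a) * c γ := by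
    intro a γ
    have h := key (ι a) γ
    rw [hπι, hα1l, mul_one, hφ1] at h
    exact h
  have hcsg : ∀ g a, (c (s g * ι a) : K) = c (s g) * φ g (c (ι a)) := by
    intro g a
    have h := key (s g) (ι a)
    rw [hs, hπι, hα1r, mul_one] at h
    exact h
  refine ⟨{ toFun := fun a => c (ι a),
            map_one' := Units.ext (by show (c (ι 1) : K) = 1; rw [map_one ι]; exact hc1),
            map_mul' := by
              intro a b
              refine Units.ext ?_
              show (c (ι (a*b)) : K) = c (ι a) * c (ι b)
              have h := key (ι a) (ι b)
              rw [hπι, hπι, hα1l, mul_one, hφ1, ← map_mul ι] at h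
              exact h }, ?_, ⟨fun g => c (s g), ?_⟩⟩
  · -- equivariance
    intro g a
    refine Units.ext ?_
    show (c (ι (act g a)) : K) = φ g (c (ι a))
    rw [hact]
    have h1 := key (s g * ι a) (s g)⁻¹
    have hπsa : π (s g * ι a) = g := by rw [map_mul, hs, hπι, mul_one]
    rw [hπsa] at h1
    have h2 := key (s g) (s g)⁻¹
    rw [hs, mul_inv_cancel, hc1, one_mul] at h2
    rw [hcsg] at h1
    rw [h2] at h1
    -- h1 : c (s g * ι a * (s g)⁻¹) * (c (s g) * φ g (c (s g)⁻¹)) = c (s g) * φ g (c (ι a)) * φ g (c (s g)⁻¹)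
    have hne1 : (c (s g) : K) ≠ 0 := Units.ne_zero _
    have hne2 : (φ g (c (s g)⁻¹) : K) ≠ 0 := by
      intro h
      have := (φ g).injective (h.trans (map_zero (φ g)).symm)
      exact Units.ne_zero _ this
    have h1' : (c (s g * ι a * (s g)⁻¹) : K) * ((c (s g) : K) * φ g (c (s g)⁻¹))
        = φ g (c (ι a)) * ((c (s g) : K) * φ g (c (s g)⁻¹)) := by linear_combination h1
    exact mul_right_cancel₀ (mul_ne_zero hne1 hne2) h1'
  · -- transgression formula
    intro g h
    show (α g h : K) = c (ι (β g h)) * (φ g (c (s h)) * ((c (s (g * h)) : K))⁻¹ * c (s g))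
    have e1 := key (s g) (s h)
    rw [hs, hs] at e1
    have e3 : (c (s (g * h)) : K) = c (ι (β g h)) * c (s g * s h) := by
      rw [hβ, mul_assoc, hcι]
    rw [e3]
    have hT : (c (s g * s h) : K) ≠ 0 := Units.ne_zero _
    have hL : (c (ι (β g h)) : K) ≠ 0 := Units.ne_zero _
    field_simp
    linear_combination e1
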